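/- Let c be a prefix-compatible cost function on a temporal graph 𝒢. Then c is finite if and only if for every source vertex s the predecessor graph G̃_s(c) of s with respect to the induced set of optimal temporal walks 𝒲^(c) is acyclic. -/

import Mathlib

open scoped Classical

/-- A time arc `(u, v, t)`: a transition from vertex `u` to vertex `v` at time step `t`. -/
abbrev TArc (V : Type*) := V × V × ℕ

/-- A directed temporal graph `𝒢 = (V, ℰ, T)`: the time arcs connect distinct vertices
and carry time labels in `[T] = {1, …, T}`. -/
structure TemporalGraph (V : Type*) where
  lifetime : ℕ
  arcs : Set (TArc V)
  arcs_valid : ∀ e ∈ arcs, e.1 ≠ e.2.1 ∧ 1 ≤ e.2.2 ∧ e.2.2 ≤ lifetime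

namespace TemporalGraph

variable {V : Type*}

/-- `L` is a temporal walk of `G`: a nonempty sequence of time arcs of `G` in which the
endpoint of each arc is the starting point of the next one, with non-decreasing labels. -/
def IsTWalk (G : TemporalGraph V) (L : List (TArc V)) : Prop :=
  L ≠ [] ∧ (∀ e ∈ L, e ∈ G.arcs) ∧ L.Chain' fun e f => e.2.1 = f.1 ∧ e.2.2 ≤ f.2.2

/-- The walk `L` starts at vertex `s`. -/
def StartsAt (s : V) (L : List (TArc V)) : Prop := ∃ e ∈ L.head?, e.1 = s

/-- The walk `L` ends at vertex `z`. -/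
def EndsAt (z : V) (L : List (TArc V)) : Prop := ∃ e ∈ L.getLast?, e.2.1 = z

/-- The walk `L` ends at the vertex appearance `(v, t)`. -/
def EndsAtApp (v : V) (t : ℕ) (L : List (TArc V)) : Prop :=
  ∃ e ∈ L.getLast?, e.2.1 = v ∧ e.2.2 = t

/-- `L` is an `s`-`z`-walk of `G`. -/
def IsWalkFromTo (G : TemporalGraph V) (s z : V) (L : List (TArc V)) : Prop :=
  G.IsTWalk L ∧ StartsAt s L ∧ EndsAt z L

/-- `L` is an `s`-`(v,t)`-walk of `G`. -/
def IsWalkFromToApp (G : TemporalGraph V) (s v : V) (t : ℕ) (L : List (TArc V)) : Prop :=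
  G.IsTWalk L ∧ StartsAt s L ∧ EndsAtApp v t L

/-- The list of vertices visited by a walk (its starting point followed by the
endpoints of all its transitions). -/
def walkVerts (L : List (TArc V)) : List V :=
  (L.head?.map Prod.fst).toList ++ L.map fun e => e.2.1

/-- A temporal path is a temporal walk that visits each vertex at most once. -/
def IsTPath (G : TemporalGraph V) (L : List (TArc V)) : Prop :=
  G.IsTWalk L ∧ (walkVerts L).Nodup

/-- The walk `L` goes through vertex `v`. -/
def VisitsVertex (v : V) (L : List (TArc V)) : Prop := v ∈ walkVerts L

/-- The walk `L` contains a transition into the vertex appearance `(v, t)`. -/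
def ContainsApp (v : V) (t : ℕ) (L : List (TArc V)) : Prop :=
  ∃ e ∈ L, e.2.1 = v ∧ e.2.2 = t

/-- The walk `L`, regarded as a walk starting at source `s`, goes through the vertex
appearance `(v, t)`; by convention the source is visited at the appearance `(s, 0)` only. -/
def VisitsApp (s v : V) (t : ℕ) (L : List (TArc V)) : Prop :=
  (v = s ∧ t = 0) ∨ (v ≠ s ∧ ContainsApp v t L)

/-- A cost function maps temporal walks (arc sequences) to `ℝ ∪ {∞}`. -/
abbrev CostFn (V : Type*) := List (TArc V) → WithTop ℝ

/-- `c*_s(v, t)`: the minimum value of `c` over all `s`-`(v,t)`-walks; it is `∞` if the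
minimum is not defined (not attained) or if there is no such walk. -/
noncomputable def cStar (G : TemporalGraph V) (c : CostFn V) (s v : V) (t : ℕ) : WithTop ℝ :=
  if h : ∃ L, G.IsWalkFromToApp s v t L ∧ ∀ L', G.IsWalkFromToApp s v t L' → c L ≤ c L' then
    c h.choose
  else ⊤

/-- `c*_s(v) = min_{t ∈ [T]} c*_s(v, t)`. -/
noncomputable def cStarV (G : TemporalGraph V) (c : CostFn V) (s v : V) : WithTop ℝ :=
  (Finset.Icc 1 G.lifetime).inf fun t => G.cStar c s v t

/-- `L` is a `c`-optimal `s`-`(v,t)`-walk: `c L = c*_s(v, t) < ∞`. -/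
def IsOptWalkToApp (G : TemporalGraph V) (c : CostFn V) (s v : V) (t : ℕ)
    (L : List (TArc V)) : Prop :=
  G.IsWalkFromToApp s v t L ∧ c L = G.cStar c s v t ∧ c L ≠ ⊤

/-- `L` is a `c`-optimal `s`-`v`-walk: `c L = c*_s(v) < ∞`. -/
def IsOptWalkTo (G : TemporalGraph V) (c : CostFn V) (s v : V) (L : List (TArc V)) : Prop :=
  G.IsWalkFromTo s v L ∧ c L = G.cStarV c s v ∧ c L ≠ ⊤

/-- The induced set `𝒲^(c)` of optimal temporal walks of `c`. -/
def OptWalks (G : TemporalGraph V) (c : CostFn V) : Set (List (TArc V)) :=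
  {L | ∃ s z, G.IsOptWalkTo c s z L}

/-- `c` is prefix-optimal: every prefix of an optimal temporal walk from `s`, ending at a
vertex appearance `(v, t)` of the walk, has cost `c*_s(v, t)`. -/
def PrefixOptimal (G : TemporalGraph V) (c : CostFn V) : Prop :=
  ∀ L ∈ G.OptWalks c, ∀ s, StartsAt s L →
    ∀ (i : ℕ) (e : TArc V), L[i]? = some e →
      c (L.take (i + 1)) = G.cStar c s e.2.1 e.2.2

/-- `c` is prefix-exchangeable: if an optimal temporal walk from `s` goes through a vertex
appearance `(v, t)`, then replacing its prefix up to `(v, t)` by any `s`-`(v,t)`-walk of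
cost `c*_s(v, t)` again yields an optimal temporal walk. -/
def PrefixExchangeable (G : TemporalGraph V) (c : CostFn V) : Prop :=
  ∀ L ∈ G.OptWalks c, ∀ s, StartsAt s L →
    ∀ (i : ℕ) (e : TArc V), L[i]? = some e →
      ∀ L', G.IsWalkFromToApp s e.2.1 e.2.2 L' → c L' = G.cStar c s e.2.1 e.2.2 →
        L' ++ L.drop (i + 1) ∈ G.OptWalks c

/-- `c` is prefix-compatible if it is both prefix-optimal and prefix-exchangeable. -/
def PrefixCompatible (G : TemporalGraph V) (c : CostFn V) : Prop :=
  G.PrefixOptimal c ∧ G.PrefixExchangeable c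

/-- `c` is finite if `𝒲^(c)` has finite cardinality. -/
def FiniteCost (G : TemporalGraph V) (c : CostFn V) : Prop := (G.OptWalks c).Finite

/-- The direct predecessor relation of source `s` with respect to the walk set `Wset`:
`IsDirPred Wset s p q` holds iff `p ∈ Pre_s(q)`, i.e. iff some walk in `Wset` starting
at `s` visits the vertex appearance `p` directly before the vertex appearance `q`, or
`p = (s, 0)` and some walk in `Wset` starting at `s` begins with a transition into `q`.
This relation is exactly the arc relation of the predecessor graph `G̃_s`. -/
def IsDirPred (Wset : Set (List (TArc V))) (s : V) (p q : V × ℕ) : Prop :=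
  ∃ L ∈ Wset, StartsAt s L ∧
    ((∃ (i : ℕ) (e f : TArc V), L[i]? = some e ∧ L[i + 1]? = some f ∧ e.2 = p ∧ f.2 = q) ∨
      (p = (s, 0) ∧ ∃ f ∈ L.head?, f.2 = q))

/-- A directed path from `p` to `q` in the static digraph given by the arc relation `R`. -/
def IsRelPath {α : Type*} (R : α → α → Prop) (p q : α) (P : List α) : Prop :=
  P.Chain' R ∧ P.head? = some p ∧ P.getLast? = some q ∧ P.Nodup

/-- `σ_{sz}`: the number of `s`-`z`-walks in `𝒲`. -/
noncomputable def sigma (G : TemporalGraph V) (𝒲 : Set (List (TArc V))) (s z : V) : ℕ :=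
  {L ∈ 𝒲 | G.IsWalkFromTo s z L}.ncard

/-- `σ_{sz}(v)`: the number of `s`-`z`-walks in `𝒲` that go through the vertex `v`. -/
noncomputable def sigmaV (G : TemporalGraph V) (𝒲 : Set (List (TArc V))) (s z v : V) : ℕ :=
  {L ∈ 𝒲 | G.IsWalkFromTo s z L ∧ VisitsVertex v L}.ncard

/-- `σ_{sz}(v, t)`: the number of `s`-`z`-walks in `𝒲` that go through the vertex
appearance `(v, t)`. -/
noncomputable def sigmaApp (G : TemporalGraph V) (𝒲 : Set (List (TArc V))) (s z v : V)
    (t : ℕ) : ℕ :=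
  {L ∈ 𝒲 | G.IsWalkFromTo s z L ∧ VisitsApp s v t L}.ncard

/-- `σ_{s(v,t)}`: the number of `c`-optimal `s`-`(v,t)`-walks. -/
noncomputable def sigmaOptApp (G : TemporalGraph V) (c : CostFn V) (s v : V) (t : ℕ) : ℕ :=
  {L | G.IsOptWalkToApp c s v t L}.ncard

/-- The pair dependency `δ_{𝒲,sz}(v)`. -/
noncomputable def pairDep (G : TemporalGraph V) (𝒲 : Set (List (TArc V))) (s z v : V) : ℝ :=
  if 0 < G.sigma 𝒲 s z then (G.sigmaV 𝒲 s z v : ℝ) / (G.sigma 𝒲 s z : ℝ) else 0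

/-- The temporal pair dependency `δ_{𝒲,sz}(v, t)`. -/
noncomputable def pairDepApp (G : TemporalGraph V) (𝒲 : Set (List (TArc V))) (s z v : V)
    (t : ℕ) : ℝ :=
  if 0 < G.sigma 𝒲 s z then (G.sigmaApp 𝒲 s z v t : ℝ) / (G.sigma 𝒲 s z : ℝ) else 0

/-- The cumulative dependency `δ_{𝒲,s}(v)`. -/
noncomputable def cumDep [Fintype V] (G : TemporalGraph V) (𝒲 : Set (List (TArc V)))
    (s v : V) : ℝ :=
  ∑ z : V, G.pairDep 𝒲 s z v

/-- The temporal cumulative dependency `δ_{𝒲,s}(v, t)`. -/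
noncomputable def cumDepApp [Fintype V] (G : TemporalGraph V) (𝒲 : Set (List (TArc V)))
    (s v : V) (t : ℕ) : ℝ :=
  ∑ z : V, G.pairDepApp 𝒲 s z v t

/-- The temporal betweenness centrality `B_𝒲(v) = Σ_{s ≠ v ≠ z} δ_{𝒲,sz}(v)`. -/
noncomputable def btw [Fintype V] (G : TemporalGraph V) (𝒲 : Set (List (TArc V)))
    (v : V) : ℝ :=
  ∑ s : V, ∑ z : V, if s ≠ v ∧ z ≠ v then G.pairDep 𝒲 s z v else 0

/-- The total temporal betweenness centrality `B*_𝒲(v) = Σ_{s, z ∈ V} δ_{𝒲,sz}(v)`. -/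
noncomputable def totBtw [Fintype V] (G : TemporalGraph V) (𝒲 : Set (List (TArc V)))
    (v : V) : ℝ :=
  ∑ s : V, ∑ z : V, G.pairDep 𝒲 s z v

/-- The edge dependency `δ_{𝒲,sz}(v, t, (v, w, t'))`: the fraction of `s`-`z`-walks in `𝒲`
that go through the vertex appearance `(v, t)` and use the time arc `(v, w, t')`. -/
noncomputable def edgeDep (G : TemporalGraph V) (𝒲 : Set (List (TArc V))) (s z v : V)
    (t : ℕ) (w : V) (t' : ℕ) : ℝ :=
  if 0 < G.sigma 𝒲 s z then
    ({L ∈ 𝒲 | G.IsWalkFromTo s z L ∧ VisitsApp s v t L ∧ (v, w, t') ∈ L}.ncard : ℝ) /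
      (G.sigma 𝒲 s z : ℝ)
  else 0

-- helper lemmas
lemma isTWalk_take {G : TemporalGraph V} {L : List (TArc V)} (h : G.IsTWalk L)
    {i : ℕ} (hi : i < L.length) : G.IsTWalk (L.take (i + 1)) := by
  refine ⟨?_, fun e he => h.2.1 e (List.mem_of_mem_take he),
    h.2.2.prefix (List.take_prefix _ _)⟩
  have : (L.take (i + 1)).length = min (i + 1) L.length := List.length_take
  intro hnil
  rw [hnil] at this
  simp at this
  omega

lemma take_walkApp {G : TemporalGraph V} {L : List (TArc V)} {s : V}
    (hw : G.IsTWalk L) (hs : StartsAt s L) {i : ℕ} {e : TArc V} (he : L[i]? = some e) :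
    G.IsWalkFromToApp s e.2.1 e.2.2 (L.take (i + 1)) := by
  have hi : i < L.length := by
    rcases List.getElem?_eq_some_iff.mp he with ⟨h, _⟩; exact h
  refine ⟨isTWalk_take hw hi, ?_, ?_⟩
  · obtain ⟨f, hf, hfs⟩ := hs
    refine ⟨f, ?_, hfs⟩
    rw [List.head?_eq_getElem?, List.getElem?_take_of_lt (by omega),
      ← List.head?_eq_getElem?]
    exact hf
  · refine ⟨e, ?_, rfl, rfl⟩
    rw [List.getLast?_eq_getElem?, List.length_take]
    have : min (i + 1) L.length - 1 = i := by omega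
    rw [this, List.getElem?_take_of_lt (by omega)]
    exact he

lemma mem_isTWalk {G : TemporalGraph V} {c : CostFn V} {L : List (TArc V)}
    (hL : L ∈ G.OptWalks c) : G.IsTWalk L := by
  obtain ⟨s, z, h⟩ := hL; exact h.1.1

lemma step_lemma {G : TemporalGraph V} {c : CostFn V} (hpc : G.PrefixCompatible c)
    {s : V} {p q : V × ℕ} (hpq : IsDirPred (G.OptWalks c) s p q)
    {W : List (TArc V)} (hW : G.IsWalkFromToApp s p.1 p.2 W)
    (hWc : c W = G.cStar c s p.1 p.2) :
    ∃ W', G.IsWalkFromToApp s q.1 q.2 W' ∧ c W' = G.cStar c s q.1 q.2 ∧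
      W.length < W'.length ∧ ∃ E ∈ G.OptWalks c, W'.length ≤ E.length := by
  obtain ⟨L, hL, hLs, hcase⟩ := hpq
  rcases hcase with ⟨i, e, f, hei, hfi, hep, hfq⟩ | ⟨hps, f, hf, hfq⟩
  · subst hep; subst hfq
    have hE : W ++ L.drop (i + 1) ∈ G.OptWalks c :=
      hpc.2 L hL s hLs i e hei W hW hWc
    have hWne : W ≠ [] := hW.1.1
    have hEs : StartsAt s (W ++ L.drop (i + 1)) := by
      obtain ⟨g, hg, hgs⟩ := hW.2.1
      exact ⟨g, by rw [List.head?_append, Option.mem_def.mp hg]; rfl, hgs⟩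
    have hilen : i + 1 < L.length := by
      rcases List.getElem?_eq_some_iff.mp hfi with ⟨h, _⟩; exact h
    have hEf : (W ++ L.drop (i + 1))[W.length]? = some f := by
      rw [List.getElem?_append_right (le_refl _)]
      simp only [Nat.sub_self]
      rw [List.getElem?_drop]
      simpa using hfi
    have hcost := hpc.1 _ hE s hEs W.length f hEf
    have hwalk := take_walkApp (mem_isTWalk hE) hEs hEf
    refine ⟨(W ++ L.drop (i + 1)).take (W.length + 1), hwalk, hcost, ?_, ⟨_, hE, ?_⟩⟩
    · rw [List.length_take]
      simp only [List.length_append, List.length_drop]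
      omega
    · rw [List.length_take]; omega
  · exfalso
    have hp2 : p.2 = 0 := by rw [hps]
    obtain ⟨g, hg, _, hgt⟩ := hW.2.2
    have hgmem : g ∈ W := List.mem_of_mem_getLast? hg
    have := (G.arcs_valid g (hW.1.2.1 g hgmem)).2.1
    omega

lemma base_lemma {G : TemporalGraph V} {c : CostFn V} (hpc : G.PrefixCompatible c)
    {s : V} {r p : V × ℕ} (hrp : IsDirPred (G.OptWalks c) s r p) :
    ∃ W, G.IsWalkFromToApp s p.1 p.2 W ∧ c W = G.cStar c s p.1 p.2 ∧
      ∃ E ∈ G.OptWalks c, W.length ≤ E.length := by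
  obtain ⟨L, hL, hLs, hcase⟩ := hrp
  have : ∃ (j : ℕ) (f : TArc V), L[j]? = some f ∧ f.2 = p := by
    rcases hcase with ⟨i, e, f, _, hfi, _, hfq⟩ | ⟨_, f, hf, hfq⟩
    · exact ⟨i + 1, f, hfi, hfq⟩
    · exact ⟨0, f, by rw [← List.head?_eq_getElem?]; exact hf, hfq⟩
  obtain ⟨j, f, hj, hfp⟩ := this
  subst hfp
  refine ⟨L.take (j + 1), take_walkApp (mem_isTWalk hL) hLs hj,
    hpc.1 L hL s hLs j f hj, ⟨L, hL, ?_⟩⟩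
  rw [List.length_take]; omega

lemma grow_lemma {G : TemporalGraph V} {c : CostFn V} (hpc : G.PrefixCompatible c)
    {s : V} {p q : V × ℕ} (h : Relation.TransGen (IsDirPred (G.OptWalks c) s) p q)
    {W : List (TArc V)} (hW : G.IsWalkFromToApp s p.1 p.2 W)
    (hWc : c W = G.cStar c s p.1 p.2) :
    ∃ W', G.IsWalkFromToApp s q.1 q.2 W' ∧ c W' = G.cStar c s q.1 q.2 ∧
      W.length < W'.length ∧ ∃ E ∈ G.OptWalks c, W'.length ≤ E.length := by
  induction h with
  | single h => exact step_lemma hpc h hW hWc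
  | tail _ h2 ih =>
    obtain ⟨W', hW', hc', hlt, _⟩ := ih
    obtain ⟨W'', hW'', hc'', hlt', hE⟩ := step_lemma hpc h2 hW' hc'
    exact ⟨W'', hW'', hc'', lt_trans hlt hlt', hE⟩

lemma forward_dir {G : TemporalGraph V} {c : CostFn V} (hpc : G.PrefixCompatible c)
    (hfin : G.FiniteCost c) (s : V) (p : V × ℕ) :
    ¬ Relation.TransGen (IsDirPred (G.OptWalks c) s) p p := by
  intro hcyc
  obtain ⟨r, _, hrp⟩ := Relation.TransGen.tail'_iff.mp hcyc
  obtain ⟨W₀, hW₀, hc₀, E₀, hE₀, hlen₀⟩ := base_lemma hpc hrp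
  have key : ∀ n : ℕ, ∃ W, G.IsWalkFromToApp s p.1 p.2 W ∧ c W = G.cStar c s p.1 p.2 ∧
      n ≤ W.length ∧ ∃ E ∈ G.OptWalks c, W.length ≤ E.length := by
    intro n
    induction n with
    | zero => exact ⟨W₀, hW₀, hc₀, Nat.zero_le _, E₀, hE₀, hlen₀⟩
    | succ k ih =>
      obtain ⟨W, hW, hc, hk, _⟩ := ih
      obtain ⟨W', hW', hc', hlt, hE⟩ := grow_lemma hpc hcyc hW hc
      exact ⟨W', hW', hc', by omega, hE⟩
  have hbdd : BddAbove (List.length '' G.OptWalks c) := (hfin.image _).bddAbove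
  obtain ⟨m, hm⟩ := hbdd
  obtain ⟨W, _, _, hnW, E, hE, hWE⟩ := key (m + 1)
  have : E.length ≤ m := hm ⟨E, hE, rfl⟩
  omega





lemma single_pred {G : TemporalGraph V} {c : CostFn V} {L : List (TArc V)}
    (hL : L ∈ G.OptWalks c) {s : V} (hs : StartsAt s L)
    {i : ℕ} (hi : i + 1 < L.length) :
    IsDirPred (G.OptWalks c) s (L[i]'(by omega)).2 (L[i + 1]'hi).2 :=
  ⟨L, hL, hs, Or.inl ⟨i, L[i]'(by omega), L[i + 1]'hi,
    List.getElem?_eq_getElem _, List.getElem?_eq_getElem _, rfl, rfl⟩⟩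

lemma transgen_indices {G : TemporalGraph V} {c : CostFn V} {L : List (TArc V)}
    (hL : L ∈ G.OptWalks c) {s : V} (hs : StartsAt s L) :
    ∀ j i (hij : i < j) (hj : j < L.length),
      Relation.TransGen (IsDirPred (G.OptWalks c) s) (L[i]'(by omega)).2 (L[j]'hj).2 := by
  intro j
  induction j with
  | zero => omega
  | succ k ih =>
    intro i hij hj
    have hk : k < L.length := by omega
    have hs1 := single_pred hL hs (i := k) hj
    rcases Nat.lt_or_ge i k with h | h
    · exact (ih i h hk).tail hs1
    · have : i = k := by omega
      subst this
      exact Relation.TransGen.single hs1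

lemma length_bound {G : TemporalGraph V} [Fintype V] {c : CostFn V}
    (hacyc : ∀ (s : V) (p : V × ℕ), ¬ Relation.TransGen (IsDirPred (G.OptWalks c) s) p p)
    {L : List (TArc V)} (hL : L ∈ G.OptWalks c) :
    L.length ≤ Fintype.card (V × Fin (G.lifetime + 1)) := by
  obtain ⟨s, z, hopt⟩ := hL
  have hLmem : L ∈ G.OptWalks c := ⟨s, z, hopt⟩
  have hs : StartsAt s L := hopt.1.2.1
  have harcs := hopt.1.1.2.1
  set φ : TArc V → V × Fin (G.lifetime + 1) :=
    fun e => (e.2.1, ⟨min e.2.2 G.lifetime, by omega⟩) with hφ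
  have key : ∀ i j (hi : i < L.length) (hj : j < L.length), i < j →
      φ (L[i]'hi) = φ (L[j]'hj) → False := by
    intro i j hi hj hij heq
    have hti : (L[i]'hi).2.2 ≤ G.lifetime :=
      (G.arcs_valid _ (harcs _ (List.getElem_mem hi))).2.2
    have htj : (L[j]'hj).2.2 ≤ G.lifetime :=
      (G.arcs_valid _ (harcs _ (List.getElem_mem hj))).2.2
    simp only [hφ, Prod.mk.injEq, Fin.mk.injEq] at heq
    obtain ⟨h1, h2⟩ := heq
    have h3 : (L[i]'hi).2 = (L[j]'hj).2 := by
      have : (L[i]'hi).2.2 = (L[j]'hj).2.2 := by omega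
      exact Prod.ext h1 this
    have := transgen_indices hLmem hs j i hij hj
    rw [← h3] at this
    exact hacyc s _ this
  have hnd : (L.map φ).Nodup := by
    rw [List.nodup_iff_injective_get]
    intro a b hab
    have ha : (a : ℕ) < L.length := by
      have := a.isLt; simpa using this
    have hb : (b : ℕ) < L.length := by
      have := b.isLt; simpa using this
    have hab' : φ (L[(a : ℕ)]'ha) = φ (L[(b : ℕ)]'hb) := by
      have := hab
      simpa [List.get_eq_getElem] using this
    by_contra hne
    rcases Nat.lt_trichotomy (a : ℕ) (b : ℕ) with h | h | h
    · exact key _ _ ha hb h hab'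
    · exact hne (Fin.ext h)
    · exact key _ _ hb ha h hab'.symm
  calc L.length = (L.map φ).length := (List.length_map _).symm
    _ ≤ _ := hnd.length_le_card

lemma backward_dir {G : TemporalGraph V} [Fintype V] {c : CostFn V}
    (hacyc : ∀ (s : V) (p : V × ℕ), ¬ Relation.TransGen (IsDirPred (G.OptWalks c) s) p p) :
    G.FiniteCost c := by
  set N := Fintype.card (V × Fin (G.lifetime + 1)) with hN
  set Φ : List (TArc V) → List (V × V × Fin (G.lifetime + 1)) :=
    List.map (fun e => (e.1, e.2.1, ⟨min e.2.2 G.lifetime, by omega⟩)) with hΦ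
  have himg : (Φ '' G.OptWalks c).Finite := by
    refine (List.finite_length_le (V × V × Fin (G.lifetime + 1)) N).subset ?_
    rintro _ ⟨L, hL, rfl⟩
    simp only [Set.mem_setOf_eq, hΦ, List.length_map]
    exact length_bound hacyc hL
  refine Set.Finite.of_finite_image himg ?_
  intro L1 h1 L2 h2 heq
  have key : ∀ L ∈ G.OptWalks c,
      (Φ L).map (fun x => (x.1, x.2.1, (x.2.2 : ℕ))) = L := by
    intro L hL
    rw [hΦ, List.map_map]
    have hcg : ∀ e ∈ L, ((fun x : V × V × Fin (G.lifetime + 1) => (x.1, x.2.1, (x.2.2 : ℕ))) ∘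
        (fun e : TArc V => (e.1, e.2.1, (⟨min e.2.2 G.lifetime, by omega⟩ : Fin (G.lifetime + 1))))) e = id e := by
      intro e he
      have hle := (G.arcs_valid e ((mem_isTWalk hL).2.1 e he)).2.2
      obtain ⟨u, v, t⟩ := e
      simp only [Function.comp_apply, id_eq] at *
      congr 1
      congr 1
      omega
    rw [List.map_congr_left hcg, List.map_id]
  rw [← key L1 h1, ← key L2 h2, heq]

/-- Let `c` be a prefix-compatible cost function on a temporal graph `𝒢`.
Then `c` is finite if and only if for every source vertex `s` the predecessor graph
`G̃_s(c)` of `s` with respect to `𝒲^(c)` is acyclic (its arc relation has no directed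
cycle, i.e. the transitive closure of the arc relation is irreflexive). -/
theorem finite_iff_predecessor_graph_acyclic {V : Type*} [Fintype V] (G : TemporalGraph V)
    (c : CostFn V) (hpc : G.PrefixCompatible c) :
    G.FiniteCost c ↔
      ∀ (s : V) (p : V × ℕ), ¬ Relation.TransGen (IsDirPred (G.OptWalks c) s) p p :=
  ⟨fun hfin => forward_dir hpc hfin, backward_dir⟩

end TemporalGraph
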